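/- Extend the product • to pairs by treating δ as a letter: (δξ) • v_δ = δ(v_L ⧢ ξ + ξ • v_δ) + v_R ⧢ ξ, where v_δ = δv_L + v_R. Then • is a right pre-Lie product on the space of such pairs: (v¹ • v²) • v³ − v¹ • (v² • v³) = (v¹ • v³) • v² − v¹ • (v³ • v²) for all v¹, v², v³. -/

import Mathlib

/-- Formal power series over the alphabet `X = {x₀, x₁}` (encoded as `Bool`,
with `x₀ = false` and `x₁ = true`). -/
abbrev FPS := List Bool → ℝ

/-- The letter `x₀`. -/
def x₀ : Bool := false

/-- The letter `x₁`. -/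
def x₁ : Bool := true

/-- Shuffle product of formal power series, via the left-quotient recursion. -/
noncomputable def shuffle : (List Bool → ℝ) → (List Bool → ℝ) → List Bool → ℝ
  | c, d, [] => c [] * d []
  | c, d, x :: w => shuffle (fun u => c (x :: u)) d w + shuffle c (fun u => d (x :: u)) w

/-- The series `1` (the empty word). -/
noncomputable def oneF : FPS := fun w => match w with | [] => 1 | _ => 0

/-- The series corresponding to a single word. -/
noncomputable def ind (η : List Bool) : FPS := fun w => if w = η then 1 else 0

/-- Left catenation of the series `e` by a letter `x`: the series `x e`. -/
noncomputable def pre (x : Bool) (e : FPS) : FPS :=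
  fun w => match w with
  | [] => 0
  | y :: u => if y = x then e u else 0

/-- The word-indexed family of endomorphisms `φ_d`, determined by
`φ_d(x₀)(e) = x₀ e` and `φ_d(x₁)(e) = x₁(d_L ⧢ e) + x₀(d_R ⧢ e)`. -/
noncomputable def phiW (d : FPS × FPS) : List Bool → FPS → FPS
  | [], e => e
  | x :: η, e =>
      if x then pre x₁ (shuffle d.1 (phiW d η e)) + pre x₀ (shuffle d.2 (phiW d η e))
      else pre x₀ (phiW d η e)

/-- The mixed composition product `c ∘̃ d_δ = Σ_η (c,η) φ_d(η)(1)`.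
(For each word `w` only the finitely many `η` with `|η| ≤ |w|` contribute.) -/
noncomputable def mixedComp (c : FPS) (d : FPS × FPS) : FPS :=
  fun w => ∑' η : List Bool, c η * phiW d η oneF w

/-- The product `ξ • v_δ` on words, for a pair `v_δ = (v_L, v_R)`:
`∅ • v = 0`, `(x₀ξ) • v = x₀(ξ • v)`, `(x₁ξ) • v = x₁(v_L ⧢ ξ + ξ • v) + x₀(v_R ⧢ ξ)`. -/
noncomputable def wordBullet : List Bool → FPS × FPS → FPS
  | [], _ => 0
  | x :: ξ, v =>
      if x then pre x₁ (shuffle v.1 (ind ξ) + wordBullet ξ v) + pre x₀ (shuffle v.2 (ind ξ))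
      else pre x₀ (wordBullet ξ v)

/-- Bilinear extension of `•` to series in the left argument. -/
noncomputable def seriesBullet (c : FPS) (v : FPS × FPS) : FPS :=
  fun w => ∑' ξ : List Bool, c ξ * wordBullet ξ v w

/-- Extension of `•` to pairs `v_δ = δ v_L + v_R`, treating `δ` as a letter:
`(δξ) • v = δ(v_L ⧢ ξ + ξ • v) + v_R ⧢ ξ`, extended bilinearly. -/
noncomputable def pairBullet (u v : FPS × FPS) : FPS × FPS :=
  (shuffle v.1 u.1 + seriesBullet u.1 v, shuffle v.2 u.1 + seriesBullet u.2 v)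

def leftQ (x : Bool) (c : FPS) : FPS := fun u => c (x :: u)

lemma shuffle_cons (c d : FPS) (x : Bool) (u : List Bool) :
    shuffle c d (x :: u) = shuffle (leftQ x c) d u + shuffle c (leftQ x d) u := rfl

lemma leftQ_add (x : Bool) (c d : FPS) : leftQ x (c + d) = leftQ x c + leftQ x d := rfl

lemma shuffle_add_left (c d e : FPS) :
    shuffle (c + d) e = shuffle c e + shuffle d e := by
  funext w
  induction w generalizing c d e with
  | nil => simp [shuffle]; ring
  | cons x u ih =>
    simp only [shuffle_cons, leftQ_add, ih, Pi.add_apply]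
    ring

lemma shuffle_add_right (c d e : FPS) :
    shuffle c (d + e) = shuffle c d + shuffle c e := by
  funext w
  induction w generalizing c d e with
  | nil => simp [shuffle]; ring
  | cons x u ih =>
    simp only [shuffle_cons, leftQ_add, ih, Pi.add_apply]
    ring

lemma shuffle_zero_left (e : FPS) : shuffle 0 e = 0 := by
  funext w
  induction w generalizing e with
  | nil => simp [shuffle]
  | cons x u ih =>
    have h0 : leftQ x (0 : FPS) = 0 := rfl
    simp only [shuffle_cons, h0, ih, Pi.zero_apply, add_zero]

lemma shuffle_zero_right (e : FPS) : shuffle e 0 = 0 := by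
  funext w
  induction w generalizing e with
  | nil => simp [shuffle]
  | cons x u ih =>
    have h0 : leftQ x (0 : FPS) = 0 := rfl
    simp only [shuffle_cons, h0, ih, Pi.zero_apply, zero_add]

lemma shuffle_smul_left (r : ℝ) (c e : FPS) :
    shuffle (fun ξ => r * c ξ) e = fun w => r * shuffle c e w := by
  funext w
  induction w generalizing c e with
  | nil => simp [shuffle]; ring
  | cons x u ih =>
    have h : leftQ x (fun ξ => r * c ξ) = fun ξ => r * (leftQ x c) ξ := rfl
    simp only [shuffle_cons, h, ih]
    ring

lemma shuffle_smul_right (r : ℝ) (c e : FPS) :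
    shuffle e (fun ξ => r * c ξ) = fun w => r * shuffle e c w := by
  funext w
  induction w generalizing c e with
  | nil => simp [shuffle]; ring
  | cons x u ih =>
    have h : leftQ x (fun ξ => r * c ξ) = fun ξ => r * (leftQ x c) ξ := rfl
    simp only [shuffle_cons, h, ih]
    ring

lemma shuffle_comm (c d : FPS) : shuffle c d = shuffle d c := by
  funext w
  induction w generalizing c d with
  | nil => simp [shuffle]; ring
  | cons x u ih => simp only [shuffle_cons, ih]; ring

lemma shuffle_assoc (c d e : FPS) :
    shuffle (shuffle c d) e = shuffle c (shuffle d e) := by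
  funext w
  induction w generalizing c d e with
  | nil => simp [shuffle]; ring
  | cons x u ih =>
    have h1 : leftQ x (shuffle c d) = shuffle (leftQ x c) d + shuffle c (leftQ x d) := rfl
    have h2 : leftQ x (shuffle d e) = shuffle (leftQ x d) e + shuffle d (leftQ x e) := rfl
    simp only [shuffle_cons, h1, h2, shuffle_add_left, shuffle_add_right, Pi.add_apply, ih]
    ring

lemma shuffle_vanish_right (c d : FPS) (w : List Bool)
    (h : ∀ η, η.length ≤ w.length → d η = 0) : shuffle c d w = 0 := by
  induction w generalizing c d with
  | nil => simp [shuffle, h [] (by simp)]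
  | cons x u ih =>
    rw [shuffle_cons, ih _ _ (fun η hη => h η (by simpa using Nat.le_succ_of_le hη)),
      ih c (leftQ x d) (fun η hη => h (x :: η) (by simpa using Nat.succ_le_succ hη)), add_zero]

lemma ind_vanish (ξ w : List Bool) (h : w.length < ξ.length) (c : FPS) :
    shuffle c (ind ξ) w = 0 := by
  apply shuffle_vanish_right
  intro η hη
  show (if η = ξ then (1:ℝ) else 0) = 0
  rw [if_neg]; rintro rfl; omega

lemma pre_apply_cons (x : Bool) (e : FPS) (y : Bool) (u : List Bool) :
    pre x e (y :: u) = if y = x then e u else 0 := rfl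

lemma wordBullet_nil_right (ξ : List Bool) (v : FPS × FPS) : wordBullet ξ v [] = 0 := by
  cases ξ with
  | nil => rfl
  | cons x ξ' => cases x <;> simp [wordBullet, pre]

lemma wordBullet_vanish (ξ : List Bool) (v : FPS × FPS) (w : List Bool)
    (h : w.length < ξ.length) : wordBullet ξ v w = 0 := by
  induction ξ generalizing w with
  | nil => simp at h
  | cons x ξ' ih =>
    cases w with
    | nil => exact wordBullet_nil_right _ _
    | cons y u =>
      simp only [List.length_cons, Nat.succ_lt_succ_iff] at h
      cases x <;> cases y <;>
        simp [wordBullet, pre_apply_cons, x₀, x₁, ih u h, ind_vanish _ _ h]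

def wordsUpTo : ℕ → Finset (List Bool)
  | 0 => {[]}
  | n+1 => insert [] ((wordsUpTo n).image (List.cons true) ∪ (wordsUpTo n).image (List.cons false))

lemma mem_wordsUpTo (ξ : List Bool) (n : ℕ) (h : ξ.length ≤ n) : ξ ∈ wordsUpTo n := by
  induction n generalizing ξ with
  | zero =>
    have : ξ = [] := List.eq_nil_of_length_eq_zero (Nat.le_zero.mp h)
    subst this; simp [wordsUpTo]
  | succ n ih =>
    cases ξ with
    | nil => simp [wordsUpTo]
    | cons x ξ' =>
      simp only [List.length_cons, Nat.succ_le_succ_iff] at h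
      rw [wordsUpTo]
      cases x
      · exact Finset.mem_insert_of_mem (Finset.mem_union_right _ (Finset.mem_image_of_mem _ (ih _ h)))
      · exact Finset.mem_insert_of_mem (Finset.mem_union_left _ (Finset.mem_image_of_mem _ (ih _ h)))

lemma sum_wordsUpTo_succ (f : List Bool → ℝ) (n : ℕ) :
    ∑ ξ ∈ wordsUpTo (n+1), f ξ =
      f [] + ∑ ξ ∈ wordsUpTo n, f (true :: ξ) + ∑ ξ ∈ wordsUpTo n, f (false :: ξ) := by
  rw [wordsUpTo]
  rw [Finset.sum_insert (by simp)]
  rw [Finset.sum_union (by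
    rw [Finset.disjoint_left]
    intro a ha hb
    simp only [Finset.mem_image] at ha hb
    obtain ⟨_, _, rfl⟩ := ha
    obtain ⟨_, _, h⟩ := hb
    simp at h)]
  rw [Finset.sum_image (by intros; simp_all), Finset.sum_image (by intros; simp_all)]
  ring

lemma seriesBullet_eq_sum (c : FPS) (v : FPS × FPS) (w : List Bool) :
    seriesBullet c v w = ∑ ξ ∈ wordsUpTo w.length, c ξ * wordBullet ξ v w := by
  apply tsum_eq_sum
  intro ξ hξ
  have : w.length < ξ.length := by
    by_contra h
    exact hξ (mem_wordsUpTo _ _ (by omega))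
  rw [wordBullet_vanish _ _ _ this, mul_zero]

lemma shuffle_expand (e c : FPS) (u : List Bool) :
    shuffle e c u = ∑ ξ ∈ wordsUpTo u.length, c ξ * shuffle e (ind ξ) u := by
  classical
  have hagree : ∀ η, η.length ≤ u.length →
      (∑ ξ ∈ wordsUpTo u.length, c ξ * ind ξ η) = c η := by
    intro η hη
    rw [Finset.sum_eq_single η]
    · simp [ind]
    · intro b _ hb; simp [ind, Ne.symm hb]
    · intro hmem; exact absurd (mem_wordsUpTo _ _ hη) hmem
  set c' : FPS := fun η => ∑ ξ ∈ wordsUpTo u.length, c ξ * ind ξ η with hc'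
  have h1 : shuffle e c u = shuffle e c' u := by
    have : shuffle e (c + (c' - c)) u = shuffle e c u + shuffle e (c' - c) u := by
      rw [shuffle_add_right]; rfl
    have hv : shuffle e (c' - c) u = 0 := by
      apply shuffle_vanish_right
      intro η hη
      have := hagree η hη
      simp only [hc', Pi.sub_apply]
      rw [this]; ring
    rw [show c + (c' - c) = c' by ring] at this
    rw [this, hv, add_zero]
  rw [h1, hc']
  -- expand finite sum
  induction' (wordsUpTo u.length) using Finset.induction with a s ha ih
  · have := congrFun (shuffle_zero_right e) u
    simp only [Finset.sum_empty]; exact this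
  · simp only [Finset.sum_insert ha]
    have : (fun η => c a * ind a η + ∑ ξ ∈ s, c ξ * ind ξ η)
        = (fun η => c a * ind a η) + (fun η => ∑ ξ ∈ s, c ξ * ind ξ η) := rfl
    rw [this, shuffle_add_right, Pi.add_apply, shuffle_smul_right, ih]

lemma shuffle_left_comm (c d e : FPS) : shuffle c (shuffle d e) = shuffle d (shuffle c e) := by
  rw [← shuffle_assoc, shuffle_comm c d, shuffle_assoc]

lemma wb_TT (ξ : List Bool) (v : FPS × FPS) (u : List Bool) :
    wordBullet (true :: ξ) v (true :: u) = shuffle v.1 (ind ξ) u + wordBullet ξ v u := by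
  simp [wordBullet, pre_apply_cons, x₀, x₁]

lemma wb_TF (ξ : List Bool) (v : FPS × FPS) (u : List Bool) :
    wordBullet (true :: ξ) v (false :: u) = shuffle v.2 (ind ξ) u := by
  simp [wordBullet, pre_apply_cons, x₀, x₁]

lemma wb_FT (ξ : List Bool) (v : FPS × FPS) (u : List Bool) :
    wordBullet (false :: ξ) v (true :: u) = 0 := by
  simp [wordBullet, pre_apply_cons, x₀, x₁]

lemma wb_FF (ξ : List Bool) (v : FPS × FPS) (u : List Bool) :
    wordBullet (false :: ξ) v (false :: u) = wordBullet ξ v u := by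
  simp [wordBullet, pre_apply_cons, x₀, x₁]

lemma wb_nil (v : FPS × FPS) (w : List Bool) : wordBullet [] v w = 0 := rfl

lemma seriesBullet_nil (c : FPS) (v : FPS × FPS) : seriesBullet c v [] = 0 := by
  simp [seriesBullet, wordBullet_nil_right]

lemma seriesBullet_true (c : FPS) (v : FPS × FPS) (u : List Bool) :
    seriesBullet c v (true :: u)
      = shuffle v.1 (leftQ true c) u + seriesBullet (leftQ true c) v u := by
  rw [seriesBullet_eq_sum, List.length_cons, sum_wordsUpTo_succ,
    shuffle_expand v.1 (leftQ true c) u, seriesBullet_eq_sum (leftQ true c) v u]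
  simp only [wb_TT, wb_FT, wb_nil, mul_zero, mul_add, zero_add, add_zero,
    Finset.sum_add_distrib, Finset.sum_const_zero, leftQ]

lemma seriesBullet_false (c : FPS) (v : FPS × FPS) (u : List Bool) :
    seriesBullet c v (false :: u)
      = shuffle v.2 (leftQ true c) u + seriesBullet (leftQ false c) v u := by
  rw [seriesBullet_eq_sum, List.length_cons, sum_wordsUpTo_succ,
    shuffle_expand v.2 (leftQ true c) u, seriesBullet_eq_sum (leftQ false c) v u]
  simp only [wb_TF, wb_FF, wb_nil, mul_zero, zero_add, add_zero, leftQ]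

lemma leftQ_sB_true (c : FPS) (v : FPS × FPS) :
    leftQ true (seriesBullet c v)
      = shuffle v.1 (leftQ true c) + seriesBullet (leftQ true c) v :=
  funext fun u => seriesBullet_true c v u

lemma leftQ_sB_false (c : FPS) (v : FPS × FPS) :
    leftQ false (seriesBullet c v)
      = shuffle v.2 (leftQ true c) + seriesBullet (leftQ false c) v :=
  funext fun u => seriesBullet_false c v u

lemma leftQ_shuffle (x : Bool) (a b : FPS) :
    leftQ x (shuffle a b) = shuffle (leftQ x a) b + shuffle a (leftQ x b) := rfl

lemma sB_add_left (a b : FPS) (v : FPS × FPS) :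
    seriesBullet (a + b) v = seriesBullet a v + seriesBullet b v := by
  funext w
  simp only [Pi.add_apply, seriesBullet_eq_sum, ← Finset.sum_add_distrib]
  exact Finset.sum_congr rfl fun ξ _ => by simp [add_mul]

lemma sbDeriv (a b : FPS) (v : FPS × FPS) :
    seriesBullet (shuffle a b) v
      = shuffle (seriesBullet a v) b + shuffle a (seriesBullet b v) := by
  funext w
  induction w generalizing a b with
  | nil =>
    show seriesBullet (shuffle a b) v [] = shuffle (seriesBullet a v) b [] + shuffle a (seriesBullet b v) []
    show _ = seriesBullet a v [] * b [] + a [] * seriesBullet b v []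
    simp [seriesBullet_nil]
  | cons x u ih =>
    cases x
    · rw [Pi.add_apply, shuffle_cons, shuffle_cons, seriesBullet_false,
        leftQ_sB_false a v, leftQ_sB_false b v]
      simp only [leftQ_shuffle, shuffle_add_right, shuffle_add_left, sB_add_left, Pi.add_apply]
      rw [ih (leftQ false a) b, ih a (leftQ false b)]
      simp only [Pi.add_apply, shuffle_assoc, shuffle_left_comm]
      ring
    · rw [Pi.add_apply, shuffle_cons, shuffle_cons, seriesBullet_true,
        leftQ_sB_true a v, leftQ_sB_true b v]
      simp only [leftQ_shuffle, shuffle_add_right, shuffle_add_left, sB_add_left, Pi.add_apply]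
      rw [ih (leftQ true a) b, ih a (leftQ true b)]
      simp only [Pi.add_apply, shuffle_assoc, shuffle_left_comm]
      ring

lemma pB_fst (u v : FPS × FPS) :
    (pairBullet u v).1 = shuffle v.1 u.1 + seriesBullet u.1 v := rfl
lemma pB_snd (u v : FPS × FPS) :
    (pairBullet u v).2 = shuffle v.2 u.1 + seriesBullet u.2 v := rfl

lemma mixed (c : FPS) (v w : FPS × FPS) :
    seriesBullet (seriesBullet c v) w + seriesBullet c (pairBullet w v)
      = seriesBullet (seriesBullet c w) v + seriesBullet c (pairBullet v w) := by
  funext u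
  induction u generalizing c with
  | nil => simp [seriesBullet_nil]
  | cons x u ih =>
    cases x
    · simp only [Pi.add_apply, seriesBullet_false, leftQ_sB_false, leftQ_sB_true, pB_snd, pB_fst,
        shuffle_add_right, shuffle_add_left, sB_add_left, sbDeriv, Pi.add_apply]
      have h := ih (leftQ false c)
      simp only [Pi.add_apply] at h
      simp only [shuffle_assoc, shuffle_left_comm]
      linarith [h]
    · simp only [Pi.add_apply, seriesBullet_true, leftQ_sB_true, pB_fst,
        shuffle_add_right, shuffle_add_left, sB_add_left, sbDeriv, Pi.add_apply]
      have h := ih (leftQ true c)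
      simp only [Pi.add_apply] at h
      simp only [shuffle_assoc, shuffle_left_comm]
      linarith [h]


/-- The product `•` is a right pre-Lie product on pairs `δ v_L + v_R`. -/
theorem pairBullet_preLie (v₁ v₂ v₃ : FPS × FPS) :
    pairBullet (pairBullet v₁ v₂) v₃ - pairBullet v₁ (pairBullet v₂ v₃) =
      pairBullet (pairBullet v₁ v₃) v₂ - pairBullet v₁ (pairBullet v₃ v₂) := by
  rw [sub_eq_sub_iff_add_eq_add]
  have hm1 := mixed v₁.1 v₂ v₃
  have hm2 := mixed v₁.2 v₂ v₃
  refine Prod.ext ?_ ?_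
  · show (pairBullet (pairBullet v₁ v₂) v₃).1 + (pairBullet v₁ (pairBullet v₃ v₂)).1
      = (pairBullet (pairBullet v₁ v₃) v₂).1 + (pairBullet v₁ (pairBullet v₂ v₃)).1
    simp only [pB_fst, pB_snd, shuffle_add_right, shuffle_add_left, sB_add_left, sbDeriv]
    simp only [shuffle_assoc, shuffle_left_comm]
    funext w
    have h := congrFun hm1 w
    simp only [Pi.add_apply] at h ⊢
    linarith
  · show (pairBullet (pairBullet v₁ v₂) v₃).2 + (pairBullet v₁ (pairBullet v₃ v₂)).2
      = (pairBullet (pairBullet v₁ v₃) v₂).2 + (pairBullet v₁ (pairBullet v₂ v₃)).2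
    simp only [pB_fst, pB_snd, shuffle_add_right, shuffle_add_left, sB_add_left, sbDeriv]
    simp only [shuffle_assoc, shuffle_left_comm]
    funext w
    have h := congrFun hm2 w
    simp only [Pi.add_apply] at h ⊢
    linarith
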